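/- For all x ∈ (0,1): 3x/(2+√(1-x²)) < 6(√(x+1) - √(1-x))/(4 + √(x+1) + √(1-x)) < arcsin x < ((1+2√2)π/12)·6(√(x+1) - √(1-x))/(4 + √(x+1) + √(1-x)) < πx/(2+√(1-x²)). -/

import Mathlib

open Real Set

/-- Helper: if f 0 = 0 and f' > 0 on (0,b) then f > 0 on (0,b). -/
lemma aux_pos_of_deriv_pos (f f' : ℝ → ℝ) (b : ℝ)
    (hf : ∀ t, HasDerivAt f (f' t) t) (h0 : f 0 = 0)
    (hd : ∀ t ∈ Set.Ioo (0:ℝ) b, 0 < f' t) :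
    ∀ t ∈ Set.Ioo (0:ℝ) b, 0 < f t := by
  intro t ht
  have hmono : StrictMonoOn f (Set.Icc 0 b) := by
    apply strictMonoOn_of_deriv_pos (convex_Icc 0 b)
    · exact fun u _ => (hf u).continuousAt.continuousWithinAt
    · intro u hu
      rw [interior_Icc] at hu
      rw [(hf u).deriv]
      exact hd u hu
  have := hmono (Set.left_mem_Icc.2 (by linarith [ht.1, ht.2] : (0:ℝ) ≤ b))
    ⟨le_of_lt ht.1, le_of_lt ht.2⟩ ht.1
  rwa [h0] at this

lemma aux_sin_sub_mul_cos {t : ℝ} (h1 : 0 < t) (h2 : t < π/2) :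
    0 < Real.sin t - t * Real.cos t := by
  have hc : 0 < Real.cos t := Real.cos_pos_of_mem_Ioo ⟨by linarith, h2⟩
  have h := Real.lt_tan h1 h2
  rw [Real.tan_eq_sin_div_cos] at h
  have := (lt_div_iff₀ hc).mp h
  linarith

/-- Cusa–Huygens: 3 sin t < t(2 + cos t) on (0, π/2). -/
lemma aux_cusa {t : ℝ} (h1 : 0 < t) (h2 : t < π/2) :
    3 * Real.sin t < t * (2 + Real.cos t) := by
  have hg1 : ∀ u ∈ Set.Ioo (0:ℝ) (π/2), 0 < 2 - 2 * Real.cos u - u * Real.sin u := by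
    apply aux_pos_of_deriv_pos _ (fun u => Real.sin u - u * Real.cos u)
    · intro u
      have h := ((hasDerivAt_const u (2:ℝ)).sub ((hasDerivAt_const u (2:ℝ)).mul (Real.hasDerivAt_cos u))).sub
          ((hasDerivAt_id u).mul (Real.hasDerivAt_sin u))
      refine h.congr_deriv ?_; symm
      simp only [id_eq]; ring
    · simp
    · exact fun u hu => aux_sin_sub_mul_cos hu.1 hu.2
  have hg : ∀ u ∈ Set.Ioo (0:ℝ) (π/2), 0 < u * (2 + Real.cos u) - 3 * Real.sin u := by
    apply aux_pos_of_deriv_pos _ (fun u => 2 - 2 * Real.cos u - u * Real.sin u)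
    · intro u
      have h := (((hasDerivAt_id u).mul ((hasDerivAt_const u (2:ℝ)).add (Real.hasDerivAt_cos u)))).sub
          ((hasDerivAt_const u (3:ℝ)).mul (Real.hasDerivAt_sin u))
      refine h.congr_deriv ?_; symm
      simp only [id_eq, Pi.add_apply, Pi.mul_apply]; ring
    · simp
    · exact hg1
  linarith [hg t ⟨h1, h2⟩]

/-- D t = 2 sin t + sin t cos t - 2 t cos t - t > 0 on (0, π/2). -/
lemma aux_D_pos {t : ℝ} (h1 : 0 < t) (h2 : t < π/2) :
    0 < 2 * Real.sin t + Real.sin t * Real.cos t - 2 * t * Real.cos t - t := by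
  have hD : ∀ u ∈ Set.Ioo (0:ℝ) (π/2),
      0 < 2 * Real.sin u + Real.sin u * Real.cos u - 2 * u * Real.cos u - u := by
    apply aux_pos_of_deriv_pos _ (fun u => 2 * Real.sin u * (u - Real.sin u))
    · intro u
      have h := ((((hasDerivAt_const u (2:ℝ)).mul (Real.hasDerivAt_sin u)).add
          ((Real.hasDerivAt_sin u).mul (Real.hasDerivAt_cos u))).sub
          (((hasDerivAt_const u (2:ℝ)).mul (hasDerivAt_id u)).mul (Real.hasDerivAt_cos u))).sub
          (hasDerivAt_id u)
      refine h.congr_deriv ?_; symm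
      simp only [id_eq, Pi.add_apply, Pi.mul_apply]
      linear_combination (-1) * Real.sin_sq_add_cos_sq u
    · simp
    · intro u hu
      have hs : 0 < Real.sin u :=
        Real.sin_pos_of_pos_of_lt_pi hu.1 (by linarith [Real.pi_gt_three, hu.2])
      have := Real.sin_lt hu.1
      have : 0 < u - Real.sin u := by linarith
      positivity
  exact hD t ⟨h1, h2⟩

/-- φ(t) = t(2+cos t)/sin t is strictly monotone on (0, π/2). -/
lemma aux_phi_mono : StrictMonoOn (fun t => t * (2 + Real.cos t) / Real.sin t)
    (Set.Ioo (0:ℝ) (π/2)) := by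
  apply strictMonoOn_of_deriv_pos (convex_Ioo 0 (π/2))
  · apply ContinuousOn.div
    · fun_prop
    · fun_prop
    · intro u hu
      exact ne_of_gt (Real.sin_pos_of_pos_of_lt_pi hu.1 (by linarith [Real.pi_gt_three, hu.2]))
  · intro u hu
    rw [interior_Ioo] at hu
    have hs : 0 < Real.sin u :=
      Real.sin_pos_of_pos_of_lt_pi hu.1 (by linarith [Real.pi_gt_three, hu.2])
    have h : HasDerivAt (fun t => t * (2 + Real.cos t) / Real.sin t)
        (((1 * (2 + Real.cos u) + u * (0 + -Real.sin u)) * Real.sin u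
          - u * (2 + Real.cos u) * Real.cos u) / Real.sin u ^ 2) u :=
      (((hasDerivAt_id u).mul ((hasDerivAt_const u (2:ℝ)).add (Real.hasDerivAt_cos u)))).div
        (Real.hasDerivAt_sin u) (ne_of_gt hs)
    rw [h.deriv]
    apply div_pos
    · have hD := aux_D_pos hu.1 hu.2
      have key : (1 * (2 + Real.cos u) + u * (0 + -Real.sin u)) * Real.sin u
          - u * (2 + Real.cos u) * Real.cos u
          = 2 * Real.sin u + Real.sin u * Real.cos u - 2 * u * Real.cos u - u := by
        linear_combination (-u) * Real.sin_sq_add_cos_sq u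
      rw [key]; exact hD
    · positivity

set_option maxHeartbeats 1000000 in
theorem stmt18 (x : ℝ) (hx : x ∈ Set.Ioo (0:ℝ) 1) :
    3*x/(2 + Real.sqrt (1 - x^2))
      < 6*(Real.sqrt (x+1) - Real.sqrt (1-x)) / (4 + Real.sqrt (x+1) + Real.sqrt (1-x)) ∧
    6*(Real.sqrt (x+1) - Real.sqrt (1-x)) / (4 + Real.sqrt (x+1) + Real.sqrt (1-x))
      < Real.arcsin x ∧
    Real.arcsin x
      < ((1 + 2*Real.sqrt 2)*Real.pi/12) *
        (6*(Real.sqrt (x+1) - Real.sqrt (1-x)) / (4 + Real.sqrt (x+1) + Real.sqrt (1-x))) ∧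
    ((1 + 2*Real.sqrt 2)*Real.pi/12) *
        (6*(Real.sqrt (x+1) - Real.sqrt (1-x)) / (4 + Real.sqrt (x+1) + Real.sqrt (1-x)))
      < Real.pi*x/(2 + Real.sqrt (1 - x^2)) := by
  obtain ⟨hx0, hx1⟩ := hx
  set r := Real.sqrt 2 with hrdef
  have hr2 : r^2 = 2 := Real.sq_sqrt (by norm_num)
  have hrpos : 0 < r := by rw [hrdef]; positivity
  have hrlt : r < 2 := by nlinarith
  have hθ0 : 0 < Real.arcsin x := Real.arcsin_pos.2 hx0
  have hθ2 : Real.arcsin x < π/2 := Real.arcsin_lt_pi_div_two.2 hx1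
  set t := Real.arcsin x / 2 with htdef
  have ht0 : 0 < t := by rw [htdef]; linarith
  have ht4 : t < π/4 := by rw [htdef]; linarith
  have htpi2 : t < π/2 := by linarith [Real.pi_pos]
  set s := Real.sin t with hsdef
  set c := Real.cos t with hcdef
  have hpy : s^2 + c^2 = 1 := by rw [hsdef, hcdef]; exact Real.sin_sq_add_cos_sq t
  have hs : 0 < s := by
    rw [hsdef]; exact Real.sin_pos_of_pos_of_lt_pi ht0 (by linarith [Real.pi_gt_three])
  have hc : 0 < c := by
    rw [hcdef]; exact Real.cos_pos_of_mem_Ioo ⟨by linarith, htpi2⟩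
  have h2t : 2 * t = Real.arcsin x := by rw [htdef]; ring
  have hxsc : x = 2*s*c := by
    rw [hsdef, hcdef, ← Real.sin_two_mul, h2t,
      Real.sin_arcsin (by linarith) (by linarith)]
  have hw : Real.sqrt (1 - x^2) = c^2 - s^2 := by
    rw [← Real.cos_arcsin, ← h2t, Real.cos_two_mul, hcdef]
    nlinarith [hpy]
  have hu : Real.sqrt (x+1) = s + c := by
    rw [show x + 1 = (s+c)^2 by linear_combination hxsc - hpy]
    exact Real.sqrt_sq (by positivity)
  have hcs : s < c := by
    have hcc : 0 < Real.cos (2*t) := Real.cos_pos_of_mem_Ioo ⟨by linarith, by linarith⟩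
    rw [Real.cos_two_mul, ← hcdef] at hcc
    nlinarith [hpy, hs, hc]
  have hv : Real.sqrt (1-x) = c - s := by
    rw [show 1 - x = (c-s)^2 by linear_combination (-1)*hpy - hxsc]
    exact Real.sqrt_sq (by linarith)
  have hcr : r/2 < c := by
    have h := Real.cos_lt_cos_of_nonneg_of_le_pi ht0.le (by linarith [Real.pi_pos]) ht4
    rwa [Real.cos_pi_div_four, ← hrdef, ← hcdef] at h
  have hc1 : c < 1 := by
    have h := Real.cos_lt_cos_of_nonneg_of_le_pi (le_refl 0)
      (by linarith [Real.pi_gt_three]) ht0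
    rwa [Real.cos_zero, ← hcdef] at h
  have hd1 : (0:ℝ) < 2 + (c^2 - s^2) := by nlinarith [hpy]
  have hd2 : (0:ℝ) < 4 + (s+c) + (c-s) := by linarith
  have hcusa : 3 * s < t * (2 + c) := by
    have h := aux_cusa ht0 htpi2
    rwa [← hsdef, ← hcdef] at h
  have hr1 : 1 < r := by nlinarith [hr2, hrpos]
  have h3 : t*(2+c) < (1+2*r)*(π/4)*s := by
    have hpi4 : (π/4 : ℝ) ∈ Set.Ioo (0:ℝ) (π/2) :=
      ⟨by linarith [Real.pi_pos], by linarith [Real.pi_pos]⟩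
    have hφ := aux_phi_mono ⟨ht0, htpi2⟩ hpi4 ht4
    dsimp only at hφ
    rw [Real.cos_pi_div_four, Real.sin_pi_div_four, ← hrdef, ← hsdef, ← hcdef] at hφ
    have hRHS : π/4 * (2 + r/2) / (r/2) = (1+2*r)*(π/4) := by
      rw [div_eq_iff (by positivity : (r/2:ℝ) ≠ 0)]
      linear_combination (-(π/4))*hr2
    rw [hRHS] at hφ
    exact (div_lt_iff₀ hs).mp hφ
  rw [hu, hv, hw, ← h2t]
  clear_value s c t r
  clear htdef hsdef hcdef hrdef hw hu hv hθ0 hθ2 hx0 hx1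
  refine ⟨?_, ?_, ?_, ?_⟩
  · rw [div_lt_div_iff₀ hd1 hd2]
    nlinarith [mul_pos hs (pow_pos (by linarith : (0:ℝ) < 1 - c) 2), hpy, hxsc, hs]
  · rw [div_lt_iff₀ hd2]
    nlinarith [hcusa]
  · rw [mul_div_assoc', lt_div_iff₀ hd2]
    nlinarith [h3]
  · have hf2 : 0 < (2-4*r)*c + r + 4 := by
      nlinarith [mul_pos (by linarith : (0:ℝ) < 4*r - 2) (by linarith : (0:ℝ) < 1 - c)]
    have hq : (1+2*r)*(2 + (c^2 - s^2)) < 2*c*(4+2*c) := by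
      nlinarith [mul_pos (by linarith : (0:ℝ) < c - r/2) hf2, hr2, hpy]
    rw [mul_div_assoc', div_lt_div_iff₀ hd2 hd1, hxsc]
    nlinarith [mul_lt_mul_of_pos_left hq (mul_pos Real.pi_pos hs), hxsc, Real.pi_pos, hs]
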